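/- Assume F separates points and let A be a shift subalgebra of A^D_{ħ,q}(F) (a *-subalgebra closed under left multiplication by elements of F). For any k ∈ Z^D, the cyclic A-submodule S_ħ^δ(|k⟩) of S_ħ(I,δ) generated by |k⟩ is a simple A-module. -/

import Mathlib

open scoped BigOperators

noncomputable section

abbrev V (D : ℕ) := Fin D → ℝ
abbrev L (D : ℕ) := Fin D → ℤ

def cz {D : ℕ} (n : L D) : V D := fun i => (n i : ℝ)

def Nr (D : ℕ) (x y : Fin D → ℝ) : ℝ :=
  ∑ m : Fin D, ∑ n : Fin D, if (n : ℕ) < (m : ℕ) then x m * y n else 0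

def Nz (D : ℕ) (k l : L D) : ℤ :=
  ∑ m : Fin D, ∑ n : Fin D, if (n : ℕ) < (m : ℕ) then k m * l n else 0

def Sh (D : ℕ) (hb : ℝ) (k : L D) (f : V D → ℂ) : V D → ℂ :=
  fun u => f (fun i => u i + hb * (k i : ℝ))

abbrev Alg (D : ℕ) := (L D) →₀ ((V D) → ℂ)

def amul (D : ℕ) (hb : ℝ) (q : ℂ) (a b : Alg D) : Alg D :=
  a.sum fun k f => b.sum fun l g =>
    Finsupp.single (k + l) ((q ^ (Nz D k l)) • (f * Sh D hb k g))

def astar (D : ℕ) (hb : ℝ) (q : ℂ) (a : Alg D) : Alg D :=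
  a.sum fun k f => Finsupp.single (-k) ((q ^ (Nz D (-k) (-k))) • Sh D hb (-k) (star f))

structure GoodF (D : ℕ) (hb : ℝ) (F : Set (V D → ℂ)) : Prop where
  zero_mem : (0 : V D → ℂ) ∈ F
  add_mem : ∀ f ∈ F, ∀ g ∈ F, f + g ∈ F
  mul_mem : ∀ f ∈ F, ∀ g ∈ F, f * g ∈ F
  smul_mem : ∀ (c : ℂ), ∀ f ∈ F, c • f ∈ F
  star_mem : ∀ f ∈ F, star f ∈ F
  shift_mem : ∀ (k : L D), ∀ f ∈ F, Sh D hb k f ∈ F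

def SeparatesPts (D : ℕ) (F : Set (V D → ℂ)) : Prop :=
  ∀ x y : V D, x ≠ y → ∃ f ∈ F, f x ≠ f y


abbrev DMod (D : ℕ) := (L D) →₀ ℂ

def Rinv {D : ℕ} (R : Matrix (Fin D) (Fin D) ℤ) : Matrix (Fin D) (Fin D) ℝ :=
  (R.map (Int.cast : ℤ → ℝ))⁻¹

def dact (D : ℕ) (hb : ℝ) (q : ℂ) (R : Matrix (Fin D) (Fin D) ℤ) (δ : V D)
    (a : Alg D) (v : DMod D) : DMod D :=
  a.sum fun n f => v.sum fun k c =>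
    Finsupp.single (k - R.mulVec n)
      ((q ^ (((Nr D ((Rinv R).mulVec (cz k) - cz n + δ) (cz n) : ℝ) : ℂ))) *
        f (hb • ((Rinv R).mulVec (cz k) - cz n + δ)) * c)

def DIso (D : ℕ) (hb : ℝ) (q : ℂ) (F : Set (V D → ℂ))
    (R : Matrix (Fin D) (Fin D) ℤ) (δ : V D)
    (R' : Matrix (Fin D) (Fin D) ℤ) (δ' : V D) : Prop :=
  ∃ φ : DMod D ≃ₗ[ℂ] DMod D,
    ∀ a : Alg D, (∀ k, a k ∈ F) → ∀ v : DMod D,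
      φ (dact D hb q R δ a v) = dact D hb q R' δ' a (φ v)


/-- A shift subalgebra: a *-subalgebra `A ⊆ A^D_{ħ,q}(F)` closed under left
multiplication by elements of `F`. -/
structure ShiftSubalg (D : ℕ) (hb : ℝ) (q : ℂ) (F : Set (V D → ℂ))
    (A : Set (Alg D)) : Prop where
  coeffs : ∀ a ∈ A, ∀ k, a k ∈ F
  add_mem : ∀ a ∈ A, ∀ b ∈ A, a + b ∈ A
  smul_mem : ∀ (c : ℂ), ∀ a ∈ A, c • a ∈ A
  mul_mem : ∀ a ∈ A, ∀ b ∈ A, amul D hb q a b ∈ A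
  star_mem : ∀ a ∈ A, astar D hb q a ∈ A
  fmul_mem : ∀ f ∈ F, ∀ a ∈ A, amul D hb q (Finsupp.single 0 f) a ∈ A


section Aux

variable {D : ℕ} {hb : ℝ} {q : ℂ} {δ : V D}

lemma cz_add (k l : L D) : cz (k + l) = cz k + cz l := by
  funext i; simp [cz]

lemma cz_sub (k l : L D) : cz (k - l) = cz k - cz l := by
  funext i; simp [cz]

lemma cz_neg (k : L D) : cz (-k) = - cz k := by
  funext i; simp [cz]

lemma cz_zero : cz (0 : L D) = 0 := by
  funext i; simp [cz]

lemma Nr_add_left (x y z : V D) : Nr D (x + y) z = Nr D x z + Nr D y z := by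
  unfold Nr
  rw [← Finset.sum_add_distrib]
  refine Finset.sum_congr rfl fun m _ => ?_
  rw [← Finset.sum_add_distrib]
  refine Finset.sum_congr rfl fun n _ => ?_
  split <;> simp [add_mul]

lemma Nr_add_right (x y z : V D) : Nr D x (y + z) = Nr D x y + Nr D x z := by
  unfold Nr
  rw [← Finset.sum_add_distrib]
  refine Finset.sum_congr rfl fun m _ => ?_
  rw [← Finset.sum_add_distrib]
  refine Finset.sum_congr rfl fun n _ => ?_
  split <;> simp [mul_add]

lemma Nr_neg_left (x z : V D) : Nr D (-x) z = - Nr D x z := by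
  unfold Nr
  rw [← Finset.sum_neg_distrib]
  refine Finset.sum_congr rfl fun m _ => ?_
  rw [← Finset.sum_neg_distrib]
  refine Finset.sum_congr rfl fun n _ => ?_
  split <;> simp

lemma Nr_neg_right (x z : V D) : Nr D x (-z) = - Nr D x z := by
  unfold Nr
  rw [← Finset.sum_neg_distrib]
  refine Finset.sum_congr rfl fun m _ => ?_
  rw [← Finset.sum_neg_distrib]
  refine Finset.sum_congr rfl fun n _ => ?_
  split <;> simp

lemma Nr_sub_left (x y z : V D) : Nr D (x - y) z = Nr D x z - Nr D y z := by
  rw [sub_eq_add_neg, Nr_add_left, Nr_neg_left, sub_eq_add_neg]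

lemma Nr_sub_right (x y z : V D) : Nr D x (y - z) = Nr D x y - Nr D x z := by
  rw [sub_eq_add_neg, Nr_add_right, Nr_neg_right, sub_eq_add_neg]

lemma Nr_zero_right (x : V D) : Nr D x 0 = 0 := by
  unfold Nr; simp

lemma Nr_zero_left (x : V D) : Nr D 0 x = 0 := by
  unfold Nr; simp

lemma Nz_cast (k l : L D) : ((Nz D k l : ℤ) : ℝ) = Nr D (cz k) (cz l) := by
  unfold Nz Nr
  push_cast [apply_ite (fun z : ℤ => (z : ℝ))]
  simp only [cz]

lemma qpow_add (hq0 : q ≠ 0) (x y : ℝ) :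
    q ^ (x : ℂ) * q ^ (y : ℂ) = q ^ (((x + y : ℝ)) : ℂ) := by
  rw [Complex.ofReal_add, Complex.cpow_add _ _ hq0]

lemma qpow_int (n : ℤ) : (q ^ n : ℂ) = q ^ ((((n : ℝ)) : ℂ)) := by
  rw [show (((n : ℝ)) : ℂ) = (n : ℂ) by push_cast; ring, Complex.cpow_intCast]

lemma conj_qpow (hq1 : ‖q‖ = 1) (x : ℝ) :
    (starRingEnd ℂ) (q ^ (x : ℂ)) = q ^ (((-x : ℝ)) : ℂ) := by
  have hq0 : q ≠ 0 := by
    intro h; rw [h] at hq1; simp at hq1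
  rw [Complex.cpow_def_of_ne_zero hq0, Complex.cpow_def_of_ne_zero hq0, ← Complex.exp_conj]
  congr 1
  have hlog : (starRingEnd ℂ) (Complex.log q) = - Complex.log q := by
    apply Complex.ext <;> simp [Complex.log_re, Complex.log_im, hq1]
  rw [map_mul, hlog, Complex.conj_ofReal]
  push_cast
  ring

lemma Sh_apply (k : L D) (f : V D → ℂ) (x : V D) :
    Sh D hb k f x = f (x + hb • cz k) := rfl

lemma Rinv_one : Rinv (1 : Matrix (Fin D) (Fin D) ℤ) = 1 := by
  unfold Rinv
  rw [Matrix.map_one _ Int.cast_zero Int.cast_one, inv_one]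

lemma dact_coeff0 (a : Alg D) (v : DMod D) (m : L D) :
    dact D hb q 1 δ a v m
      = ∑ n ∈ a.support, ∑ l ∈ v.support,
          if l - n = m then
            q ^ (((Nr D (cz m + δ) (cz n) : ℝ)) : ℂ) * a n (hb • (cz m + δ)) * v l
          else 0 := by
  unfold dact
  rw [Rinv_one]
  simp only [Matrix.one_mulVec, Finsupp.sum, Finsupp.finset_sum_apply, Finsupp.single_apply]
  refine Finset.sum_congr rfl fun n _ => Finset.sum_congr rfl fun l _ => ?_
  split
  · rename_i h
    have hc : cz l - cz n + δ = cz m + δ := by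
      rw [← h, cz_sub]
    rw [hc]
  · rfl

lemma dact_coeff (a : Alg D) (v : DMod D) (m : L D) (t : Finset (L D))
    (ht : v.support ⊆ t) :
    dact D hb q 1 δ a v m
      = ∑ l ∈ t,
          q ^ (((Nr D (cz m + δ) (cz (l - m)) : ℝ)) : ℂ)
            * a (l - m) (hb • (cz m + δ)) * v l := by
  rw [dact_coeff0, Finset.sum_comm]
  rw [Finset.sum_subset ht (fun l _ hl => by
    rw [Finsupp.notMem_support_iff.mp hl]; simp)]
  refine Finset.sum_congr rfl fun l _ => ?_
  have hcond : ∀ n : L D, (l - n = m) ↔ (n = l - m) := by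
    intro n
    constructor
    · intro h; rw [← h]; abel
    · intro h; rw [h]; abel
  simp only [hcond]
  rw [Finset.sum_ite_eq' a.support (l - m)]
  by_cases hmem : l - m ∈ a.support
  · rw [if_pos hmem]
  · rw [if_neg hmem, Finsupp.notMem_support_iff.mp hmem]
    simp

lemma dact_coeff2 (a : Alg D) (v : DMod D) (m : L D) (t : Finset (L D))
    (ht : a.support ⊆ t) :
    dact D hb q 1 δ a v m
      = ∑ n ∈ t,
          q ^ (((Nr D (cz m + δ) (cz n) : ℝ)) : ℂ)
            * a n (hb • (cz m + δ)) * v (m + n) := by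
  rw [dact_coeff0]
  rw [Finset.sum_subset ht (fun n _ hn => by
    rw [Finsupp.notMem_support_iff.mp hn]
    simp)]
  refine Finset.sum_congr rfl fun n _ => ?_
  have hcond : ∀ l : L D, (l - n = m) ↔ (l = m + n) := by
    intro l
    constructor
    · intro h; rw [← h]; abel
    · intro h; rw [h]; abel
  simp only [hcond]
  rw [Finset.sum_ite_eq' v.support (m + n)]
  by_cases hmem : m + n ∈ v.support
  · rw [if_pos hmem]
  · rw [if_neg hmem, Finsupp.notMem_support_iff.mp hmem, mul_zero]

lemma dact_single_coeff (b : Alg D) (k m : L D) :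
    dact D hb q 1 δ b (Finsupp.single k 1) m
      = q ^ (((Nr D (cz m + δ) (cz (k - m)) : ℝ)) : ℂ)
          * b (k - m) (hb • (cz m + δ)) := by
  rw [dact_coeff b _ m {k} Finsupp.support_single_subset, Finset.sum_singleton,
    Finsupp.single_eq_same, mul_one]

lemma amul_coeff (a b : Alg D) (n : L D) (x : V D) :
    amul D hb q a b n x
      = ∑ k ∈ a.support, ∑ l ∈ b.support,
          if k + l = n then
            (q ^ (Nz D k l)) * (a k x * b l (x + hb • cz k))
          else 0 := by
  unfold amul
  simp only [Finsupp.sum, Finsupp.finset_sum_apply, Finset.sum_apply, Finsupp.single_apply,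
    ite_apply, Pi.zero_apply, Pi.smul_apply, Pi.mul_apply, smul_eq_mul, Sh_apply]

lemma amul_coeff' (a b : Alg D) (n : L D) (x : V D) :
    amul D hb q a b n x
      = ∑ k ∈ a.support,
          (q ^ (Nz D k (n - k))) * (a k x * b (n - k) (x + hb • cz k)) := by
  rw [amul_coeff]
  refine Finset.sum_congr rfl fun k _ => ?_
  have hcond : ∀ l : L D, (k + l = n) ↔ (l = n - k) := by
    intro l
    constructor
    · intro h; rw [← h]; abel
    · intro h; rw [h]; abel
  simp only [hcond]
  rw [Finset.sum_ite_eq' b.support (n - k)]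
  by_cases hmem : n - k ∈ b.support
  · rw [if_pos hmem]
  · rw [if_neg hmem, Finsupp.notMem_support_iff.mp hmem]
    simp

lemma astar_coeff (u : Alg D) (n : L D) (x : V D) :
    astar D hb q u n x
      = ∑ j ∈ u.support,
          if -j = n then
            (q ^ (Nz D (-j) (-j))) * star (u j (x + hb • cz (-j)))
          else 0 := by
  unfold astar
  simp only [Finsupp.sum, Finsupp.finset_sum_apply, Finset.sum_apply, Finsupp.single_apply,
    ite_apply, Pi.zero_apply, Pi.smul_apply, smul_eq_mul, Sh_apply, Pi.star_apply]

lemma supp_amul_subset (a b : Alg D) :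
    (amul D hb q a b).support ⊆ (a.support ×ˢ b.support).image fun p => p.1 + p.2 := by
  intro n hn
  rw [Finsupp.mem_support_iff] at hn
  obtain ⟨x, hx⟩ := Function.ne_iff.mp hn
  rw [amul_coeff] at hx
  simp only [Pi.zero_apply] at hx
  obtain ⟨k, hk, hk2⟩ := Finset.exists_ne_zero_of_sum_ne_zero hx
  obtain ⟨l, hl, hl2⟩ := Finset.exists_ne_zero_of_sum_ne_zero hk2
  have : k + l = n := by
    by_contra hcon
    rw [if_neg hcon] at hl2
    exact hl2 rfl
  exact Finset.mem_image.mpr ⟨(k, l), Finset.mem_product.mpr ⟨hk, hl⟩, this⟩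

lemma act_assoc (hq0 : q ≠ 0) (a b : Alg D) (v : DMod D) :
    dact D hb q 1 δ (amul D hb q a b) v
      = dact D hb q 1 δ a (dact D hb q 1 δ b v) := by
  ext m
  rw [dact_coeff2 (amul D hb q a b) v m _ (supp_amul_subset a b),
    dact_coeff2 a _ m a.support subset_rfl]
  have hrhs : ∀ n : L D, dact D hb q 1 δ b v (m + n)
      = ∑ j ∈ b.support,
          q ^ (((Nr D (cz (m + n) + δ) (cz j) : ℝ)) : ℂ)
            * b j (hb • (cz (m + n) + δ)) * v (m + n + j) :=
    fun n => dact_coeff2 b v (m + n) b.support subset_rfl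
  simp only [hrhs]
  -- expand LHS
  have lhs_eq : ∀ n ∈ (a.support ×ˢ b.support).image (fun p : L D × L D => p.1 + p.2),
      q ^ (((Nr D (cz m + δ) (cz n) : ℝ)) : ℂ)
          * amul D hb q a b n (hb • (cz m + δ)) * v (m + n)
        = ∑ k ∈ a.support,
            q ^ (((Nr D (cz m + δ) (cz n) : ℝ)) : ℂ)
              * ((q ^ (Nz D k (n - k)))
                * (a k (hb • (cz m + δ)) * b (n - k) (hb • (cz m + δ) + hb • cz k)))
              * v (m + n) := by
    intro n _
    rw [amul_coeff', Finset.mul_sum, Finset.sum_mul]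
  rw [Finset.sum_congr rfl lhs_eq, Finset.sum_comm]
  -- now both sides are sums over a.support
  refine Finset.sum_congr rfl fun k hk => ?_
  rw [Finset.mul_sum]
  -- reindex LHS inner sum over n by j = n - k
  have step : ∀ n ∈ (a.support ×ˢ b.support).image (fun p : L D × L D => p.1 + p.2),
      q ^ (((Nr D (cz m + δ) (cz n) : ℝ)) : ℂ)
          * ((q ^ (Nz D k (n - k)))
            * (a k (hb • (cz m + δ)) * b (n - k) (hb • (cz m + δ) + hb • cz k)))
          * v (m + n)
        = ∑ j ∈ b.support, if n = k + j then
            q ^ (((Nr D (cz m + δ) (cz n) : ℝ)) : ℂ)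
              * ((q ^ (Nz D k (n - k)))
                * (a k (hb • (cz m + δ)) * b (n - k) (hb • (cz m + δ) + hb • cz k)))
              * v (m + n)
          else 0 := by
    intro n _
    have hcond : ∀ j : L D, (n = k + j) ↔ (j = n - k) := by
      intro j
      constructor
      · intro h; rw [h]; abel
      · intro h; rw [h]; abel
    simp only [hcond]
    rw [Finset.sum_ite_eq' b.support (n - k)]
    by_cases hmem : n - k ∈ b.support
    · rw [if_pos hmem]
    · rw [if_neg hmem, Finsupp.notMem_support_iff.mp hmem]
      simp
  rw [Finset.sum_congr rfl step, Finset.sum_comm]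
  refine Finset.sum_congr rfl fun j hj => ?_
  have hkj : k + j ∈ (a.support ×ˢ b.support).image (fun p : L D × L D => p.1 + p.2) :=
    Finset.mem_image.mpr ⟨(k, j), Finset.mem_product.mpr ⟨hk, hj⟩, rfl⟩
  rw [Finset.sum_ite_eq' _ (k + j), if_pos hkj]
  have h1 : k + j - k = j := by abel
  rw [h1]
  have h2 : hb • (cz (m + k) + δ) = hb • (cz m + δ) + hb • cz k := by
    rw [cz_add, ← smul_add]
    congr 1
    abel
  rw [h2]
  have h3 : m + (k + j) = m + k + j := by abel
  rw [h3]
  -- combine phases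
  rw [qpow_int (Nz D k j), Nz_cast]
  rw [show q ^ (((Nr D (cz m + δ) (cz (k + j)) : ℝ)) : ℂ)
        * (q ^ (((Nr D (cz k) (cz j) : ℝ)) : ℂ)
          * (a k (hb • (cz m + δ)) * b j (hb • (cz m + δ) + hb • cz k)))
        * v (m + k + j)
      = (q ^ (((Nr D (cz m + δ) (cz (k + j)) : ℝ)) : ℂ)
          * q ^ (((Nr D (cz k) (cz j) : ℝ)) : ℂ))
        * (a k (hb • (cz m + δ)) * b j (hb • (cz m + δ) + hb • cz k))
        * v (m + k + j) from by ring]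
  rw [qpow_add hq0]
  have hexp : Nr D (cz m + δ) (cz (k + j)) + Nr D (cz k) (cz j)
      = Nr D (cz m + δ) (cz k) + Nr D (cz (m + k) + δ) (cz j) := by
    simp only [cz_add, Nr_add_left, Nr_add_right]
    ring
  rw [hexp, ← qpow_add hq0]
  ring

end Aux


section Aux2

variable {D : ℕ} {hb : ℝ} {q : ℂ} {δ : V D} {F : Set (V D → ℂ)}

lemma star_qpow (hq1 : ‖q‖ = 1) (x : ℝ) :
    star (q ^ (x : ℂ)) = q ^ (((-x : ℝ)) : ℂ) := conj_qpow hq1 x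

lemma pt_inj (hhb : 0 < hb) {m n : L D}
    (h : hb • (cz m + δ) = hb • (cz n + δ)) : m = n := by
  have h2 : cz m + δ = cz n + δ := smul_right_injective (V D) (ne_of_gt hhb) h
  have h3 : cz m = cz n := add_left_injective δ h2
  funext i
  have h4 : ((m i : ℝ)) = ((n i : ℝ)) := congrFun h3 i
  exact_mod_cast h4

lemma interp (hhb : 0 < hb) (hF : GoodF D hb F) (hsep : SeparatesPts D F)
    (f0 : V D → ℂ) (hf0 : f0 ∈ F) (m0 : L D) (hf0ne : f0 (hb • (cz m0 + δ)) ≠ 0)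
    (S : Finset (L D)) (k : L D) (c : ℂ) :
    ∃ g ∈ F, ∀ m ∈ S, g (hb • (cz m + δ)) = if m = k then c else 0 := by
  set g0 : V D → ℂ := Sh D hb (m0 - k) f0 with hg0def
  have hg0F : g0 ∈ F := hF.shift_mem _ _ hf0
  have hg0 : g0 (hb • (cz k + δ)) ≠ 0 := by
    rw [hg0def, Sh_apply]
    have hx : hb • (cz k + δ) + hb • cz (m0 - k) = hb • (cz m0 + δ) := by
      rw [cz_sub, ← smul_add]; congr 1; abel
    rw [hx]; exact hf0ne
  have pair : ∀ m : L D, m ≠ k → ∃ p ∈ F,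
      p (hb • (cz k + δ)) = 1 ∧ p (hb • (cz m + δ)) = 0 := by
    intro m hmk
    obtain ⟨f1, hf1F, hf1⟩ := hsep (hb • (cz k + δ)) (hb • (cz m + δ))
      (fun h => hmk (pt_inj hhb h).symm)
    set p0 : V D → ℂ := f1 (hb • (cz m + δ)) • g0 + (-1 : ℂ) • (g0 * f1) with hp0
    have hp0F : p0 ∈ F := hF.add_mem _ (hF.smul_mem _ _ hg0F) _
      (hF.smul_mem _ _ (hF.mul_mem _ hg0F _ hf1F))
    have hp0k : p0 (hb • (cz k + δ))
        = g0 (hb • (cz k + δ)) * (f1 (hb • (cz m + δ)) - f1 (hb • (cz k + δ))) := by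
      simp [hp0]; ring
    have hp0m : p0 (hb • (cz m + δ)) = 0 := by
      simp [hp0]; ring
    have hne : p0 (hb • (cz k + δ)) ≠ 0 := by
      rw [hp0k]
      exact mul_ne_zero hg0 (sub_ne_zero.mpr (Ne.symm hf1))
    refine ⟨(p0 (hb • (cz k + δ)))⁻¹ • p0, hF.smul_mem _ _ hp0F, ?_, ?_⟩
    · exact inv_mul_cancel₀ hne
    · show (p0 (hb • (cz k + δ)))⁻¹ * p0 (hb • (cz m + δ)) = 0
      rw [hp0m, mul_zero]
  have main : ∀ T : Finset (L D), k ∉ T → ∃ g ∈ F,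
      g (hb • (cz k + δ)) = 1 ∧ ∀ m ∈ T, g (hb • (cz m + δ)) = 0 := by
    intro T
    induction T using Finset.induction_on with
    | empty =>
      intro _
      exact ⟨(g0 (hb • (cz k + δ)))⁻¹ • g0, hF.smul_mem _ _ hg0F,
        inv_mul_cancel₀ hg0, fun m hm => absurd hm (Finset.notMem_empty m)⟩
    | @insert a T haT ih =>
      intro hk
      rw [Finset.mem_insert] at hk
      push_neg at hk
      obtain ⟨g, hgF, hg1, hgz⟩ := ih hk.2
      obtain ⟨p, hpF, hp1, hpz⟩ := pair a (fun h => hk.1 h.symm)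
      refine ⟨g * p, hF.mul_mem _ hgF _ hpF,
        by simp only [Pi.mul_apply, hg1, hp1, mul_one], ?_⟩
      intro m hm
      rcases Finset.mem_insert.mp hm with rfl | hm'
      · simp only [Pi.mul_apply, hpz, mul_zero]
      · simp only [Pi.mul_apply, hgz m hm', zero_mul]
  obtain ⟨g1, hg1F, hg1k, hg1z⟩ := main (S.erase k) (Finset.notMem_erase k S)
  refine ⟨c • g1, hF.smul_mem _ _ hg1F, ?_⟩
  intro m hm
  by_cases hmk : m = k
  · subst hmk
    rw [if_pos rfl]
    simp only [Pi.smul_apply, smul_eq_mul, hg1k, mul_one]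
  · rw [if_neg hmk]
    simp only [Pi.smul_apply, smul_eq_mul, hg1z m (Finset.mem_erase.mpr ⟨hmk, hm⟩), mul_zero]

lemma adjoint_key (hq1 : ‖q‖ = 1) (b : Alg D) (k : L D) (v : DMod D)
    (hv : v = dact D hb q 1 δ b (Finsupp.single k 1)) :
    dact D hb q 1 δ (astar D hb q b) v k = ∑ l ∈ v.support, star (v l) * v l := by
  have hq0 : q ≠ 0 := fun h => by simp [h] at hq1
  rw [dact_coeff _ v k v.support subset_rfl]
  refine Finset.sum_congr rfl fun l hl => ?_
  rw [astar_coeff]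
  have hcond : ∀ j : L D, (-j = l - k) ↔ (j = k - l) := by
    intro j
    constructor
    · intro h; rw [← neg_neg j, h]; abel
    · intro h; rw [h]; abel
  simp only [hcond]
  rw [Finset.sum_ite_eq' b.support (k - l)]
  have hvl : v l = q ^ (((Nr D (cz l + δ) (cz (k - l)) : ℝ)) : ℂ)
      * b (k - l) (hb • (cz l + δ)) := by
    rw [hv, dact_single_coeff]
  have hmem : k - l ∈ b.support := by
    by_contra hmem
    have hz : v l = 0 := by
      rw [hvl, Finsupp.notMem_support_iff.mp hmem]; simp
    exact Finsupp.mem_support_iff.mp hl hz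
  rw [if_pos hmem]
  have hpt : hb • (cz k + δ) + hb • cz (-(k - l)) = hb • (cz l + δ) := by
    rw [cz_neg, cz_sub, ← smul_add]; congr 1; abel
  rw [hpt, qpow_int (Nz D (-(k - l)) (-(k - l))), Nz_cast, cz_neg, Nr_neg_left,
    Nr_neg_right, neg_neg]
  conv_rhs => rw [hvl]
  rw [star_mul', star_qpow hq1]
  have hphase : q ^ (((Nr D (cz k + δ) (cz (l - k)) : ℝ)) : ℂ)
      * q ^ (((Nr D (cz (k - l)) (cz (k - l)) : ℝ)) : ℂ)
      = q ^ (((-(Nr D (cz l + δ) (cz (k - l))) : ℝ)) : ℂ) := by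
    rw [qpow_add hq0]
    congr 1
    rw [Complex.ofReal_inj]
    simp only [cz_sub, Nr_add_left, Nr_add_right, Nr_sub_left, Nr_sub_right]
    ring
  rw [← hphase, hvl]
  ring

end Aux2

/-- Proposition 4.2: if `F` separates points and `A` is a shift subalgebra of
`A^D_{ħ,q}(F)`, then the cyclic `A`-submodule `A|k⟩ ⊆ S_ħ(1,δ)` generated by `|k⟩` is
simple: every nonzero element of it generates the whole module. -/
theorem stmt17 (D : ℕ) (hb : ℝ) (hhb : 0 < hb) (q : ℂ) (hq : ‖q‖ = 1)
    (F : Set (V D → ℂ)) (hF : GoodF D hb F) (hsep : SeparatesPts D F)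
    (A : Set (Alg D)) (hA : ShiftSubalg D hb q F A) (δ : V D) (k : L D) :
    ∀ v ∈ {w : DMod D | ∃ a ∈ A, w = dact D hb q 1 δ a (Finsupp.single k 1)},
      v ≠ 0 →
      ∀ w ∈ {w : DMod D | ∃ a ∈ A, w = dact D hb q 1 δ a (Finsupp.single k 1)},
        ∃ a ∈ A, dact D hb q 1 δ a v = w := by
  intro v hv hvne w hw
  obtain ⟨b, hbA, hvb⟩ := hv
  obtain ⟨c, hcA, hwc⟩ := hw
  have hq0 : q ≠ 0 := fun h => by simp [h] at hq
  have huA : astar D hb q b ∈ A := hA.star_mem b hbA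
  obtain ⟨l0, hl0⟩ : ∃ l, v l ≠ 0 := by
    by_contra h
    push_neg at h
    exact hvne (Finsupp.ext fun l => by simp [h l])
  have hvl0 : b (k - l0) (hb • (cz l0 + δ)) ≠ 0 := by
    intro h
    apply hl0
    rw [hvb, dact_single_coeff, h, mul_zero]
  set w' := dact D hb q 1 δ (astar D hb q b) v with hw'def
  have hw'k : w' k = ∑ l ∈ v.support, star (v l) * v l := adjoint_key hq b k v hvb
  have hw'kne : w' k ≠ 0 := by
    rw [hw'k]
    have hsum : ∑ l ∈ v.support, star (v l) * v l
        = ((∑ l ∈ v.support, Complex.normSq (v l) : ℝ) : ℂ) := by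
      rw [Complex.ofReal_sum]
      refine Finset.sum_congr rfl fun l _ => ?_
      rw [mul_comm]
      exact Complex.mul_conj (v l)
    rw [hsum]
    exact Complex.ofReal_ne_zero.mpr (ne_of_gt (Finset.sum_pos'
      (fun l _ => Complex.normSq_nonneg _)
      ⟨l0, Finsupp.mem_support_iff.mpr hl0, Complex.normSq_pos.mpr hl0⟩))
  obtain ⟨g, hgF, hgval⟩ := interp hhb hF hsep (b (k - l0)) (hA.coeffs b hbA (k - l0))
    l0 hvl0 w'.support k (w' k)⁻¹
  have hproj : dact D hb q 1 δ (Finsupp.single 0 g) w' = Finsupp.single k 1 := by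
    ext m
    rw [dact_coeff (Finsupp.single 0 g) w' m w'.support subset_rfl]
    have hterm : ∀ l, q ^ (((Nr D (cz m + δ) (cz (l - m)) : ℝ)) : ℂ)
          * (Finsupp.single (0 : L D) g) (l - m) (hb • (cz m + δ)) * w' l
        = if l = m then g (hb • (cz m + δ)) * w' m else 0 := by
      intro l
      rcases eq_or_ne l m with rfl | hne
      · rw [if_pos rfl, sub_self, Finsupp.single_eq_same, cz_zero, Nr_zero_right,
          Complex.ofReal_zero, Complex.cpow_zero, one_mul]
      · rw [if_neg hne, Finsupp.single_eq_of_ne (sub_ne_zero.mpr hne)]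
        simp
    rw [Finset.sum_congr rfl fun l _ => hterm l, Finset.sum_ite_eq' w'.support m,
      Finsupp.single_apply]
    by_cases hm : m ∈ w'.support
    · rw [if_pos hm, hgval m hm]
      by_cases hmk : m = k
      · subst hmk
        rw [if_pos rfl, if_pos rfl, inv_mul_cancel₀ hw'kne]
      · rw [if_neg hmk, if_neg (Ne.symm hmk), zero_mul]
    · rw [if_neg hm]
      have hmk : k ≠ m := by
        rintro rfl
        exact hm (Finsupp.mem_support_iff.mpr hw'kne)
      rw [if_neg hmk]
  refine ⟨amul D hb q c (amul D hb q (Finsupp.single 0 g) (astar D hb q b)),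
    hA.mul_mem c hcA _ (hA.fmul_mem g hgF _ huA), ?_⟩
  rw [act_assoc hq0, act_assoc hq0, ← hw'def, hproj]
  exact hwc.symm
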